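/- Let F₁,…,F_k and G₁,…,G_k be holomorphic homogeneous polynomials on ℂⁿ such that for every j the degree of F_j is different from the degree of G_j, and define h : ℂⁿ → ℝ by h(z) = ∑_{j=1}^k Re( F_j(z)·conj(G_j(z)) ). Then either h is identically zero, or h changes sign: there exist points z, z′ ∈ ℂⁿ with h(z) > 0 and h(z′) < 0. -/

import Mathlib

open MvPolynomial

noncomputable section

/-- if `F_j` and `G_j` are holomorphic homogeneous polynomials of different
degrees for every `j`, then `h(z) = ∑_j Re (F_j(z) · conj (G_j(z)))` is identically zero or
changes sign. -/
lemma aux_eval_smul {n m : ℕ} {φ : MvPolynomial (Fin n) ℂ} (hφ : φ.IsHomogeneous m)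
    (c : ℂ) (z : Fin n → ℂ) : eval (c • z) φ = c ^ m * eval z φ := by
  rw [eval_eq', eval_eq', Finset.mul_sum]
  refine Finset.sum_congr rfl fun d hd => ?_
  have hdeg : ∑ i, d i = m := by
    have h1 : Finsupp.degree d = m := by
      have := hφ (mem_support_iff.mp hd)
      rw [Finsupp.degree_eq_weight_one]; exact this
    rw [← h1, Finsupp.degree]
    exact (Finset.sum_subset (Finset.subset_univ _)
      (fun i _ hi => Finsupp.notMem_support_iff.mp hi)).symm
  calc coeff d φ * ∏ i, (c • z) i ^ d i
      = coeff d φ * ((∏ i, c ^ d i) * ∏ i, z i ^ d i) := by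
        rw [← Finset.prod_mul_distrib]; simp [mul_pow]
    _ = c ^ m * (coeff d φ * ∏ i, z i ^ d i) := by
        rw [Finset.prod_pow_eq_pow_sum, hdeg]; ring

theorem re_sum_mixed_degrees_changes_sign_or_vanishes {n k : ℕ}
    (F G : Fin k → MvPolynomial (Fin n) ℂ) (mF mG : Fin k → ℕ)
    (hF : ∀ j, (F j).IsHomogeneous (mF j)) (hG : ∀ j, (G j).IsHomogeneous (mG j))
    (hdeg : ∀ j, mF j ≠ mG j) :
    (∀ z : Fin n → ℂ, (∑ j, eval z (F j) * (starRingEnd ℂ) (eval z (G j))).re = 0) ∨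
    (∃ z z' : Fin n → ℂ,
      0 < (∑ j, eval z (F j) * (starRingEnd ℂ) (eval z (G j))).re ∧
      (∑ j, eval z' (F j) * (starRingEnd ℂ) (eval z' (G j))).re < 0) := by
  set h : (Fin n → ℂ) → ℝ :=
    fun z => (∑ j, eval z (F j) * (starRingEnd ℂ) (eval z (G j))).re with hh
  by_cases hall : ∀ z, h z = 0
  · exact Or.inl hall
  right
  push_neg at hall
  obtain ⟨z₀, hz₀⟩ := hall
  set N : ℕ := 1 + ∑ j, (mF j + mG j) with hN
  have hNpos : 0 < N := by omega
  set ω : ℂ := Complex.exp (2 * Real.pi * Complex.I / N) with hω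
  have hprim : IsPrimitiveRoot ω N := Complex.isPrimitiveRoot_exp N hNpos.ne'
  have hωne : ω ≠ 0 := Complex.exp_ne_zero _
  have hconj : (starRingEnd ℂ) ω = ω⁻¹ := by
    rw [hω, ← Complex.exp_conj, ← Complex.exp_neg]
    congr 1
    simp [map_div₀, Complex.conj_I, map_ofNat]
    ring
  -- the key vanishing of the averaged sum
  have key : ∀ z : Fin n → ℂ, ∑ r ∈ Finset.range N, h (ω ^ r • z) = 0 := by
    intro z
    have hterm : ∀ r ∈ Finset.range N,
        (∑ j, eval (ω ^ r • z) (F j) * (starRingEnd ℂ) (eval (ω ^ r • z) (G j)))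
        = ∑ j, (ω ^ ((mF j : ℤ) - (mG j : ℤ))) ^ r *
            (eval z (F j) * (starRingEnd ℂ) (eval z (G j))) := by
      intro r _
      refine Finset.sum_congr rfl fun j _ => ?_
      rw [aux_eval_smul (hF j) _ z, aux_eval_smul (hG j) _ z]
      rw [map_mul, map_pow, map_pow, hconj]
      have key2 : (ω ^ r) ^ mF j * (ω⁻¹ ^ r) ^ mG j
          = (ω ^ ((mF j : ℤ) - (mG j : ℤ))) ^ r := by
        rw [inv_pow, ← zpow_natCast ω r, ← zpow_neg,
          ← zpow_natCast (ω ^ (r : ℤ)) (mF j), ← zpow_natCast (ω ^ (-(r : ℤ))) (mG j),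
          ← zpow_mul, ← zpow_mul, ← zpow_add₀ hωne,
          ← zpow_natCast (ω ^ ((mF j : ℤ) - (mG j : ℤ))) r, ← zpow_mul]
        congr 1; ring
      calc (ω ^ r) ^ mF j * eval z (F j) *
            ((ω⁻¹ ^ r) ^ mG j * (starRingEnd ℂ) (eval z (G j)))
          = ((ω ^ r) ^ mF j * (ω⁻¹ ^ r) ^ mG j) *
              (eval z (F j) * (starRingEnd ℂ) (eval z (G j))) := by ring
        _ = _ := by rw [key2]
    have : ∑ r ∈ Finset.range N,
        (∑ j, eval (ω ^ r • z) (F j) * (starRingEnd ℂ) (eval (ω ^ r • z) (G j))) = 0 := by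
      rw [Finset.sum_congr rfl hterm, Finset.sum_comm]
      refine Finset.sum_eq_zero fun j _ => ?_
      rw [← Finset.sum_mul]
      have hx1 : ω ^ ((mF j : ℤ) - (mG j : ℤ)) ≠ 1 := by
        intro hx
        have hdvd : (N : ℤ) ∣ ((mF j : ℤ) - (mG j : ℤ)) :=
          (hprim.zpow_eq_one_iff_dvd _).mp hx
        have habs : |(mF j : ℤ) - (mG j : ℤ)| < N := by
          have h1 : (mF j : ℤ) ≤ ∑ i, ((mF i : ℤ) + (mG i : ℤ)) := by
            calc (mF j : ℤ) ≤ (mF j : ℤ) + (mG j : ℤ) := le_add_of_nonneg_right (by positivity)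
              _ ≤ _ := Finset.single_le_sum (f := fun i => (mF i : ℤ) + (mG i : ℤ))
                  (fun i _ => by positivity) (Finset.mem_univ j)
          have h2 : (mG j : ℤ) ≤ ∑ i, ((mF i : ℤ) + (mG i : ℤ)) := by
            calc (mG j : ℤ) ≤ (mF j : ℤ) + (mG j : ℤ) := le_add_of_nonneg_left (by positivity)
              _ ≤ _ := Finset.single_le_sum (f := fun i => (mF i : ℤ) + (mG i : ℤ))
                  (fun i _ => by positivity) (Finset.mem_univ j)
          have hNcast : (N : ℤ) = 1 + ∑ i, ((mF i : ℤ) + (mG i : ℤ)) := by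
            rw [hN]; push_cast; rfl
          rw [abs_sub_lt_iff, hNcast]
          omega
        have := Int.eq_zero_of_abs_lt_dvd hdvd habs
        have : (mF j : ℤ) = (mG j : ℤ) := by omega
        exact hdeg j (by exact_mod_cast this)
      have hxN : (ω ^ ((mF j : ℤ) - (mG j : ℤ))) ^ N = 1 := by
        rw [← zpow_natCast (ω ^ ((mF j : ℤ) - (mG j : ℤ))) N, ← zpow_mul, mul_comm,
          zpow_mul, zpow_natCast, hprim.pow_eq_one, one_zpow]
      rw [geom_sum_eq hx1, hxN, sub_self, zero_div, zero_mul]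
    calc ∑ r ∈ Finset.range N, h (ω ^ r • z)
        = (∑ r ∈ Finset.range N,
            ∑ j, eval (ω ^ r • z) (F j) * (starRingEnd ℂ) (eval (ω ^ r • z) (G j))).re := by
          rw [Complex.re_sum]
      _ = 0 := by rw [this, Complex.zero_re]
  have hf0 : h (ω ^ 0 • z₀) = h z₀ := by rw [pow_zero, one_smul]
  rcases lt_or_gt_of_ne hz₀ with hneg | hpos
  · -- h z₀ < 0 : find a positive point
    have : ¬ ∀ r ∈ Finset.range N, h (ω ^ r • z₀) ≤ 0 := by
      intro hle
      have : ∑ r ∈ Finset.range N, h (ω ^ r • z₀) < 0 :=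
        Finset.sum_neg' hle ⟨0, Finset.mem_range.2 hNpos, by rw [hf0]; exact hneg⟩
      exact absurd (key z₀) (ne_of_lt this)
    push_neg at this
    obtain ⟨r, _, hr⟩ := this
    exact ⟨ω ^ r • z₀, z₀, hr, hneg⟩
  · have : ¬ ∀ r ∈ Finset.range N, 0 ≤ h (ω ^ r • z₀) := by
      intro hle
      have : 0 < ∑ r ∈ Finset.range N, h (ω ^ r • z₀) :=
        Finset.sum_pos' hle ⟨0, Finset.mem_range.2 hNpos, by rw [hf0]; exact hpos⟩
      exact absurd (key z₀) (ne_of_gt this)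
    push_neg at this
    obtain ⟨r, _, hr⟩ := this
    exact ⟨z₀, ω ^ r • z₀, hpos, hr⟩
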